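/- For every integer N ≥ 1 there exists a unique finite sequence (b₁,…,b_N) of real numbers with b_N = 1, bₙ ∈ (0,1) for every n < N, and bₙ² = b_{n−1}²/((1 − b_{n−1}²)²(1 + b_{n−1}²)) for every n = 2,…,N. -/

import Mathlib

/-- The finite sequence `(b 1, …, b N)` satisfies the backward recursion:
`b N = 1`, `b n ∈ (0,1)` for `1 ≤ n < N`, and
`bₙ² = b_{n-1}² / ((1 - b_{n-1}²)² (1 + b_{n-1}²))` for `n = 2, …, N`. -/
def KyleBSeq (N : ℕ) (b : ℕ → ℝ) : Prop :=
  b N = 1 ∧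
  (∀ n, 1 ≤ n → n < N → b n ∈ Set.Ioo (0 : ℝ) 1) ∧
  (∀ n, 2 ≤ n → n ≤ N →
    (b n) ^ 2 = (b (n - 1)) ^ 2 / ((1 - (b (n - 1)) ^ 2) ^ 2 * (1 + (b (n - 1)) ^ 2)))

lemma kyle_inj {x₁ x₂ : ℝ} (h₁0 : 0 < x₁) (h₁1 : x₁ < 1) (h₂0 : 0 < x₂) (h₂1 : x₂ < 1)
    (h : x₁ / ((1-x₁)^2*(1+x₁)) = x₂ / ((1-x₂)^2*(1+x₂))) : x₁ = x₂ := by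
  have d₁ : (0:ℝ) < (1-x₁)^2*(1+x₁) := by nlinarith
  have d₂ : (0:ℝ) < (1-x₂)^2*(1+x₂) := by nlinarith
  have hcross : x₁ * ((1-x₂)^2*(1+x₂)) = x₂ * ((1-x₁)^2*(1+x₁)) := by
    rw [div_eq_div_iff (ne_of_gt d₁) (ne_of_gt d₂)] at h
    linarith [h]
  have key : (x₁ - x₂) * (1 + x₁*x₂*(1 - x₁ - x₂)) = 0 := by linear_combination hcross
  have hb : 0 < 1 + x₁*x₂*(1 - x₁ - x₂) := by
    nlinarith [mul_pos h₁0 h₂0, mul_pos (mul_pos h₁0 h₂0) (by nlinarith : (0:ℝ) < 2 - x₁ - x₂)]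
  have := mul_eq_zero.mp key
  rcases this with h' | h'
  · linarith
  · linarith

lemma kyle_exists {y : ℝ} (hy : 0 < y) :
    ∃ x, 0 < x ∧ x < 1 ∧ x / ((1-x)^2*(1+x)) = y := by
  set p : ℝ → ℝ := fun x => y * ((1-x)^2*(1+x)) - x with hp
  have hc : ContinuousOn p (Set.Icc 0 1) := (by continuity : Continuous p).continuousOn
  have h0 : p 0 = y := by simp [hp]
  have h1 : p 1 = -1 := by simp [hp]
  have hmem : (0:ℝ) ∈ Set.Ioo (p 1) (p 0) := by rw [h0, h1]; constructor <;> linarith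
  obtain ⟨x, hx, hpx⟩ := intermediate_value_Ioo' (by norm_num : (0:ℝ) ≤ 1) hc hmem
  refine ⟨x, hx.1, hx.2, ?_⟩
  have d : (0:ℝ) < (1-x)^2*(1+x) := by nlinarith [hx.1, hx.2]
  have : x = y * ((1-x)^2*(1+x)) := by
    have := hpx
    simp [hp] at this
    linarith
  rw [div_eq_iff (ne_of_gt d)]
  linarith [this]

noncomputable def kyleNext (y : ℝ) : ℝ :=
  if h : 0 < y then (kyle_exists h).choose else 1/2

lemma kyleNext_spec {y : ℝ} (hy : 0 < y) :
    0 < kyleNext y ∧ kyleNext y < 1 ∧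
      kyleNext y / ((1 - kyleNext y)^2*(1 + kyleNext y)) = y := by
  rw [kyleNext, dif_pos hy]
  exact (kyle_exists hy).choose_spec

noncomputable def kyleA : ℕ → ℝ
  | 0 => 1
  | k+1 => kyleNext (kyleA k)

lemma kyleA_zero : kyleA 0 = 1 := rfl

lemma kyleA_pos : ∀ k, 0 < kyleA k := by
  intro k
  induction k with
  | zero => norm_num [kyleA]
  | succ k ih => exact (kyleNext_spec ih).1

lemma kyleA_lt_one : ∀ k, 0 < k → kyleA k < 1 := by
  rintro (_|k) h
  · omega
  · exact (kyleNext_spec (kyleA_pos k)).2.1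

lemma kyleA_rec (k : ℕ) :
    kyleA (k+1) / ((1 - kyleA (k+1))^2 * (1 + kyleA (k+1))) = kyleA k :=
  (kyleNext_spec (kyleA_pos k)).2.2

/-- For every `N ≥ 1` there exists a unique finite sequence `(b 1, …, b N)` with
`b N = 1`, `b n ∈ (0,1)` for `n < N`, and
`bₙ² = b_{n-1}²/((1 − b_{n-1}²)²(1 + b_{n-1}²))` for `n = 2, …, N`. -/
theorem kyle_bseq_exists_unique (N : ℕ) (hN : 1 ≤ N) :
    ∃ b : ℕ → ℝ, KyleBSeq N b ∧
      ∀ b' : ℕ → ℝ, KyleBSeq N b' → ∀ n, 1 ≤ n → n ≤ N → b' n = b n := by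
  set b : ℕ → ℝ := fun n => Real.sqrt (kyleA (N - n)) with hbdef
  have hbsq : ∀ n, (b n) ^ 2 = kyleA (N - n) := by
    intro n
    simp only [hbdef]
    rw [sq, Real.mul_self_sqrt (kyleA_pos _).le]
  have hbpos : ∀ n, 0 < b n := fun n => Real.sqrt_pos.mpr (kyleA_pos _)
  have hKyle : KyleBSeq N b := by
    refine ⟨?_, ?_, ?_⟩
    · simp only [hbdef, Nat.sub_self, kyleA_zero, Real.sqrt_one]
    · intro n h1 h2
      refine ⟨hbpos n, ?_⟩
      have hlt : kyleA (N - n) < 1 := kyleA_lt_one _ (by omega)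
      have := hbsq n
      nlinarith [hbpos n]
    · intro n h2 hn
      have hidx : N - (n - 1) = (N - n) + 1 := by omega
      rw [hbsq n, hbsq (n-1), hidx]
      exact (kyleA_rec (N - n)).symm
  refine ⟨b, hKyle, ?_⟩
  intro b' hb'
  have huniq : ∀ k n, 1 ≤ n → n ≤ N → N - n = k → b' n = b n := by
    intro k
    induction k with
    | zero =>
      intro n h1 h2 h3
      have : n = N := by omega
      subst this
      rw [hb'.1, hKyle.1]
    | succ k ih =>
      intro n h1 h2 h3
      have hn : n < N := by omega
      have hih : b' (n+1) = b (n+1) := ih (n+1) (by omega) (by omega) (by omega)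
      have e' := hb'.2.2 (n+1) (by omega) (by omega)
      have e := hKyle.2.2 (n+1) (by omega) (by omega)
      simp only [Nat.add_sub_cancel] at e e'
      rw [hih, e] at e'
      have m' := hb'.2.1 n h1 hn
      have m := hKyle.2.1 n h1 hn
      have s'0 : 0 < (b' n)^2 := pow_pos m'.1 2
      have s'1 : (b' n)^2 < 1 := by nlinarith [m'.1, m'.2]
      have s0 : 0 < (b n)^2 := pow_pos m.1 2
      have s1 : (b n)^2 < 1 := by nlinarith [m.1, m.2]
      have := kyle_inj s0 s1 s'0 s'1 e'
      have : (b' n)^2 = (b n)^2 := this.symm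
      calc b' n = Real.sqrt ((b' n)^2) := (Real.sqrt_sq m'.1.le).symm
        _ = Real.sqrt ((b n)^2) := by rw [this]
        _ = b n := Real.sqrt_sq m.1.le
  intro n h1 h2
  exact huniq (N - n) n h1 h2 rfl
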